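/- Under the conditions λI ⪯ H ⪯ LI, ‖H₁ - H‖₂ ≤ μ, and P = H₁ + μI, the condition number of the preconditioned matrix satisfies κ(P^{-1}H) = σ_max(P^{-1}H)/σ_min(P^{-1}H) ≤ 1 + 2μ/λ. -/

import Mathlib

open Matrix

private lemma quad_bound {d : ℕ} {μ : ℝ} {A : Matrix (Fin d) (Fin d) ℝ}
    (h : ‖Matrix.toEuclideanCLM (𝕜 := ℝ) A‖ ≤ μ) (v : Fin d → ℝ) :
    |v ⬝ᵥ A.mulVec v| ≤ μ * (v ⬝ᵥ v) := by
  set T := Matrix.toEuclideanCLM (𝕜 := ℝ) A with hT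
  set x : EuclideanSpace ℝ (Fin d) := (WithLp.equiv 2 _).symm v with hx
  have h1 : v ⬝ᵥ A.mulVec v = inner ℝ x (T x) := by
    rw [EuclideanSpace.inner_eq_star_dotProduct]
    simp [hT, hx, Matrix.toLin'_apply, Matrix.mulVec]
    exact dotProduct_comm _ _
  have h2 : v ⬝ᵥ v = ‖x‖ * ‖x‖ := by
    rw [← real_inner_self_eq_norm_mul_norm, EuclideanSpace.inner_eq_star_dotProduct]
    simp [hx]
  rw [h1, h2]
  calc |inner ℝ x (T x)| ≤ ‖x‖ * ‖T x‖ := abs_real_inner_le_norm _ _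
    _ ≤ ‖x‖ * (‖T‖ * ‖x‖) := by
        have := T.le_opNorm x
        have hx0 : (0:ℝ) ≤ ‖x‖ := norm_nonneg x
        nlinarith [norm_nonneg (T x)]
    _ ≤ μ * (‖x‖ * ‖x‖) := by nlinarith [norm_nonneg x, sq_nonneg ‖x‖]

/-- Under `λI ⪯ H ⪯ LI`, `‖H₁ - H‖₂ ≤ μ` and `P = H₁ + μI`, the condition
number of the preconditioned matrix satisfies
`κ(P⁻¹H) = σ_max(P⁻¹H)/σ_min(P⁻¹H) ≤ 1 + 2μ/λ`; equivalently the ratio of any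
two (real, positive) eigenvalues of `P⁻¹H` is at most `1 + 2μ/λ`. -/
theorem preconditioned_condition_number {d : ℕ} (lam L μ : ℝ)
    (hlam : 0 < lam) (hL : lam ≤ L) (hμ : 0 < μ)
    (H H₁ : Matrix (Fin d) (Fin d) ℝ) (hH : H.PosDef) (hH₁ : H₁.PosDef)
    (hlow : (H - lam • (1 : Matrix (Fin d) (Fin d) ℝ)).PosSemidef)
    (hup : ((L • (1 : Matrix (Fin d) (Fin d) ℝ)) - H).PosSemidef)
    (hclose : ‖Matrix.toEuclideanCLM (𝕜 := ℝ) (H₁ - H)‖ ≤ μ) :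
    ∀ a ∈ spectrum ℝ ((H₁ + μ • (1 : Matrix (Fin d) (Fin d) ℝ))⁻¹ * H),
      ∀ b ∈ spectrum ℝ ((H₁ + μ • (1 : Matrix (Fin d) (Fin d) ℝ))⁻¹ * H),
        a / b ≤ 1 + 2 * μ / lam := by
  have hC : (0:ℝ) < 1 + 2 * μ / lam := by positivity
  set C : ℝ := 1 + 2 * μ / lam with hCdef
  set P := H₁ + μ • (1 : Matrix (Fin d) (Fin d) ℝ) with hPdef
  have hone : ((μ : ℝ) • (1 : Matrix (Fin d) (Fin d) ℝ)).PosSemidef := by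
    rw [Matrix.smul_one_eq_diagonal]
    exact Matrix.PosSemidef.diagonal (fun _ => hμ.le)
  have hPpd : P.PosDef := hH₁.add_posSemidef hone
  have hPdet : IsUnit P.det := isUnit_iff_ne_zero.mpr (ne_of_gt hPpd.det_pos)
  -- quadratic form facts
  have key : ∀ c ∈ spectrum ℝ (P⁻¹ * H), 1/C ≤ c ∧ c ≤ 1 := by
    intro c hc
    rw [spectrum.mem_iff] at hc
    have hdet : ((c • (1:Matrix (Fin d) (Fin d) ℝ)) - P⁻¹ * H).det = 0 := by
      by_contra hne
      exact hc (by
        rw [Algebra.algebraMap_eq_smul_one]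
        exact (Matrix.isUnit_iff_isUnit_det _).mpr (isUnit_iff_ne_zero.mpr hne))
    obtain ⟨v, hv0, hv⟩ := (Matrix.exists_mulVec_eq_zero_iff).mpr hdet
    have h1 : (P⁻¹ * H) *ᵥ v = c • v := by
      have := hv
      rw [sub_mulVec, sub_eq_zero] at this
      rw [← this, smul_mulVec, one_mulVec]
    have heig : H *ᵥ v = c • (P *ᵥ v) := by
      have h2 := congrArg (fun w => P *ᵥ w) h1
      simp only [mulVec_mulVec, mulVec_smul] at h2
      rwa [← Matrix.mul_assoc, Matrix.mul_nonsing_inv _ hPdet, Matrix.one_mul] at h2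
    set q : ℝ := v ⬝ᵥ (H *ᵥ v) with hq
    set p : ℝ := v ⬝ᵥ (P *ᵥ v) with hp
    set nx : ℝ := v ⬝ᵥ v with hnx
    have hqpos : 0 < q := by simpa using hH.dotProduct_mulVec_pos hv0
    have hppos : 0 < p := by simpa using hPpd.dotProduct_mulVec_pos hv0
    have hnxpos : 0 < nx := by
      have h := (Matrix.dotProduct_star_self_pos_iff (R := ℝ) (n := Fin d)).mpr hv0
      simpa [hnx] using h
    have hqc : q = c * p := by
      rw [hq, heig, dotProduct_smul]; rfl
    -- |v ⬝ᵥ (H₁ - H) v| ≤ μ nx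
    have habs := quad_bound hclose v
    have he : v ⬝ᵥ ((H₁ - H) *ᵥ v) = p - μ * nx - q := by
      simp only [hp, hPdef, hq, hnx, sub_mulVec, add_mulVec, smul_mulVec, one_mulVec,
        dotProduct_sub, dotProduct_add, dotProduct_smul, smul_eq_mul]
      ring
    rw [he] at habs
    have hqlam : lam * nx ≤ q := by
      have := hlow.dotProduct_mulVec_nonneg v
      simp only [sub_mulVec, smul_mulVec, one_mulVec, dotProduct_sub, dotProduct_smul,
        smul_eq_mul, star_trivial] at this
      linarith [this]
    have habs' := abs_le.mp habs
    -- q ≤ p  and  p ≤ C * q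
    have hle1 : q ≤ p := by linarith [habs'.1, hnxpos]
    have hle2 : p ≤ C * q := by
      have h2μ : 2 * μ / lam * lam = 2 * μ := by field_simp
      have hmul : (2 * μ / lam) * (lam * nx) ≤ (2 * μ / lam) * q :=
        mul_le_mul_of_nonneg_left hqlam (by positivity)
      rw [hCdef]
      nlinarith [habs'.2]
    constructor
    · rw [div_le_iff₀ hC]
      have : p ≤ C * (c * p) := by rw [← hqc]; exact hle2
      nlinarith
    · nlinarith
  intro a ha b hb
  obtain ⟨ha1, ha2⟩ := key a ha
  obtain ⟨hb1, hb2⟩ := key b hb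
  have hbpos : 0 < b := lt_of_lt_of_le (by positivity) hb1
  rw [div_le_iff₀ hbpos]
  have h1 : C * (1/C) = 1 := by field_simp
  have h2 := mul_le_mul_of_nonneg_left hb1 hC.le
  have h3 : 1 ≤ C * b := le_of_eq_of_le h1.symm h2
  linarith
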